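/- (Single-step potential inequality in the multiplicative-weights analysis, from the proof of Theorem A.1.) Let m, n ≥ 1 be integers, A ∈ ℝ^{m×n}, b ∈ ℝ^n, and β > 0. Define the potential Φ(x) := smax_β(Ax) + ⟨b, x⟩ for x ∈ ℝ^n. Then for all x, h ∈ ℝ^n: Φ(x + h) ≤ Φ(x) + (⟨p, Ah⟩ + ⟨b, h⟩) + β·‖Ah‖∞², where p ∈ ℝ^m is given by p_i := exp(β·(Ax)_i)/∑_{j=1}^m exp(β·(Ax)_j). -/

import Mathlib

open Real Set


lemma exp_neg_quad {t : ℝ} (ht : 0 ≤ t) : Real.exp (-t) ≤ 1 - t + t ^ 2 / 2 := by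
  have hq := Real.quadratic_le_exp_of_nonneg ht
  have hmul : Real.exp t * Real.exp (-t) = 1 := by rw [← Real.exp_add]; simp
  nlinarith [Real.exp_pos t, Real.exp_pos (-t), sq_nonneg (t ^ 2)]

lemma lemA {t : ℝ} (ht : 0 ≤ t) :
    Real.exp t - Real.exp (-t) ≤ t * (Real.exp t + Real.exp (-t)) := by
  set f : ℝ → ℝ := fun u => u * (Real.exp u + Real.exp (-u)) - (Real.exp u - Real.exp (-u)) with hf
  have hder : ∀ s : ℝ, HasDerivAt f (s * (Real.exp s - Real.exp (-s))) s := by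
    intro s
    have h1 : HasDerivAt (fun u : ℝ => Real.exp (-u)) (-Real.exp (-s)) s := by
      simpa [Function.comp_def] using (Real.hasDerivAt_exp (-s)).comp s (hasDerivAt_neg s)
    have h2 := (Real.hasDerivAt_exp s).fun_add h1
    have h3 := (hasDerivAt_id s).fun_mul h2
    have h4 := (Real.hasDerivAt_exp s).fun_sub h1
    exact (h3.fun_sub h4).congr_deriv (by simp only [id_eq]; ring)
  have mono : MonotoneOn f (Ici (0:ℝ)) := by
    apply monotoneOn_of_hasDerivWithinAt_nonneg (convex_Ici 0)
      (fun s _ => (hder s).continuousAt.continuousWithinAt)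
      (fun s _ => (hder s).hasDerivWithinAt)
    intro s hs
    rw [interior_Ici, mem_Ioi] at hs
    have h1 : Real.exp (-s) ≤ Real.exp s := Real.exp_le_exp.2 (by linarith [hs.le])
    have := hs.le
    nlinarith
  have h0 : f 0 ≤ f t := mono (self_mem_Ici) (mem_Ici.2 ht) ht
  simp only [hf] at h0
  simp at h0
  linarith

lemma lemB {t : ℝ} (ht : 0 ≤ t) :
    Real.exp t + Real.exp (-t) ≤ 2 * Real.exp (t ^ 2 / 2) := by
  set g : ℝ → ℝ := fun u => (Real.exp u + Real.exp (-u)) * Real.exp (-(u ^ 2 / 2)) with hg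
  have hder : ∀ s : ℝ, HasDerivAt g
      ((Real.exp s - Real.exp (-s)) * Real.exp (-(s ^ 2 / 2))
        + (Real.exp s + Real.exp (-s)) * (Real.exp (-(s ^ 2 / 2)) * (-s))) s := by
    intro s
    have h1 : HasDerivAt (fun u : ℝ => Real.exp (-u)) (-Real.exp (-s)) s := by
      simpa [Function.comp_def] using (Real.hasDerivAt_exp (-s)).comp s (hasDerivAt_neg s)
    have h2 := (Real.hasDerivAt_exp s).fun_add h1
    have hq : HasDerivAt (fun u : ℝ => -(u ^ 2 / 2)) (-s) s := by
      simpa using (((hasDerivAt_pow 2 s).div_const 2).fun_neg)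
    have h3 : HasDerivAt (fun u : ℝ => Real.exp (-(u ^ 2 / 2)))
        (Real.exp (-(s ^ 2 / 2)) * (-s)) s := (Real.hasDerivAt_exp _).comp s hq
    have := h2.fun_mul h3
    exact this.congr_deriv (by ring)
  have anti : AntitoneOn g (Ici (0:ℝ)) := by
    apply antitoneOn_of_hasDerivWithinAt_nonpos (convex_Ici 0)
      (fun s _ => (hder s).continuousAt.continuousWithinAt)
      (fun s _ => (hder s).hasDerivWithinAt)
    intro s hs
    rw [interior_Ici, mem_Ioi] at hs
    have hA := lemA hs.le
    have hE := Real.exp_pos (-(s ^ 2 / 2))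
    nlinarith
  have h0 : g t ≤ g 0 := anti (self_mem_Ici) (mem_Ici.2 ht) ht
  simp only [hg] at h0
  simp at h0
  have hpos := Real.exp_pos (-(t ^ 2 / 2))
  have hmul : Real.exp (t ^ 2 / 2) * Real.exp (-(t ^ 2 / 2)) = 1 := by
    rw [← Real.exp_add]; simp
  nlinarith [Real.exp_pos (t^2/2)]

lemma lemC {t : ℝ} (ht : 0 ≤ t) :
    t * (Real.exp t + Real.exp (-t)) ≤ (1 + t ^ 2 / 2) * (Real.exp t - Real.exp (-t)) := by
  have hq := Real.quadratic_le_exp_of_nonneg ht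
  have hn := exp_neg_quad ht
  have hmul : Real.exp t * Real.exp (-t) = 1 := by rw [← Real.exp_add]; simp
  nlinarith [Real.exp_pos t, Real.exp_pos (-t), sq_nonneg t,
    mul_le_mul_of_nonneg_left hn (le_of_lt (mul_pos (Real.exp_pos t) (Real.exp_pos t)))]

private lemma key {t : ℝ} (v : ℝ) (ht : 0 < t) :
    (Real.exp t + Real.exp (-t)) / 2 + (v / t) * ((Real.exp t - Real.exp (-t)) / 2)
      ≤ Real.exp (v + t ^ 2) := by
  set S : ℝ := (Real.exp t - Real.exp (-t)) / (2 * t) with hSdef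
  have hEF : Real.exp (-t) < Real.exp t := Real.exp_lt_exp.2 (by linarith)
  have hSpos : 0 < S := by
    apply div_pos (by linarith) (by linarith)
  -- tangent line bound
  have tangent : S * (1 + (v + t ^ 2) - Real.log S) ≤ Real.exp (v + t ^ 2) := by
    have h1 := Real.add_one_le_exp (v + t ^ 2 - Real.log S)
    have h2 : S * (1 + (v + t ^ 2) - Real.log S)
        ≤ S * Real.exp (v + t ^ 2 - Real.log S) := by
      apply mul_le_mul_of_nonneg_left _ hSpos.le
      linarith
    have h3 : S * Real.exp (v + t ^ 2 - Real.log S) = Real.exp (v + t ^ 2) := by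
      rw [show v + t ^ 2 - Real.log S = (v + t ^ 2) + (- Real.log S) by ring,
        Real.exp_add, Real.exp_neg, Real.exp_log hSpos]
      field_simp
    linarith
  -- log S ≤ t^2/2
  have hA' : S ≤ (Real.exp t + Real.exp (-t)) / 2 := by
    rw [hSdef, div_le_div_iff₀ (by linarith) (by norm_num)]
    nlinarith [lemA ht.le]
  have hlogS : Real.log S ≤ t ^ 2 / 2 := by
    have hSle : S ≤ Real.exp (t ^ 2 / 2) := le_trans hA' (by linarith [lemB ht.le])
    calc Real.log S ≤ Real.log (Real.exp (t ^ 2 / 2)) :=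
          Real.log_le_log hSpos hSle
      _ = t ^ 2 / 2 := Real.log_exp _
  -- cosh ≤ S * (1 + t^2/2)
  have hC' : (Real.exp t + Real.exp (-t)) / 2 ≤ S * (1 + t ^ 2 / 2) := by
    rw [hSdef]
    rw [div_mul_eq_mul_div, div_le_div_iff₀ (by norm_num) (by linarith)]
    nlinarith [lemC ht.le]
  have hv : (v / t) * ((Real.exp t - Real.exp (-t)) / 2) = S * v := by
    rw [hSdef]; field_simp
  rw [hv]
  have : S * (1 + t ^ 2 / 2) + S * v ≤ S * (1 + (v + t ^ 2) - Real.log S) := by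
    have : t ^ 2 / 2 + v ≤ (v + t ^ 2) - Real.log S := by linarith
    nlinarith [hSpos]
  linarith

/-- The smooth maximum `smax_β(x) = (1/β)·ln(∑ i, exp(β·x_i))`. -/
noncomputable def smax {m : ℕ} (β : ℝ) (x : Fin m → ℝ) : ℝ :=
  (1 / β) * Real.log (∑ i, Real.exp (β * x i))

/-- Single-step potential inequality in the multiplicative-weights analysis
(from the proof of Theorem A.1), where `Φ(x) = smax_β(Ax) + ⟨b, x⟩`.
The norm on `Fin m → ℝ` is the sup (ℓ∞) norm. -/
theorem mw_single_step (m n : ℕ) (hm : 1 ≤ m) (hn : 1 ≤ n)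
    (A : Matrix (Fin m) (Fin n) ℝ) (b : Fin n → ℝ) (β : ℝ) (hβ : 0 < β)
    (Φ : (Fin n → ℝ) → ℝ)
    (hΦ : ∀ z, Φ z = smax β (A.mulVec z) + ∑ i, b i * z i)
    (x h : Fin n → ℝ) (p : Fin m → ℝ)
    (hp : ∀ i, p i = Real.exp (β * A.mulVec x i) / ∑ j, Real.exp (β * A.mulVec x j)) :
    Φ (x + h) ≤ Φ x + ((∑ i, p i * A.mulVec h i) + ∑ i, b i * h i)
      + β * ‖A.mulVec h‖ ^ 2 := by
  haveI : Nonempty (Fin m) := Fin.pos_iff_nonempty.mp hm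
  set y : Fin m → ℝ := A.mulVec x with hy
  set d : Fin m → ℝ := A.mulVec h with hd
  set w : Fin m → ℝ := fun i => Real.exp (β * y i) with hw
  set W : ℝ := ∑ i, w i with hW
  have hWpos : 0 < W := Finset.sum_pos (fun i _ => Real.exp_pos _) Finset.univ_nonempty
  set c : ℝ := ∑ i, p i * d i with hc
  set M : ℝ := ‖d‖ with hM
  have hMnn : 0 ≤ M := norm_nonneg _
  set T : ℝ := β * M with hT
  have hwd : ∑ i, w i * d i = W * c := by
    rw [hc]
    rw [Finset.mul_sum]
    apply Finset.sum_congr rfl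
    intro i _
    rw [hp i]
    field_simp
    simp only [hw]; ring
  -- main exponential-sum bound
  have hZ : (∑ i, Real.exp (β * (y i + d i))) ≤ W * Real.exp (β * c + T ^ 2) := by
    have hsplit : (∑ i, Real.exp (β * (y i + d i))) = ∑ i, w i * Real.exp (β * d i) := by
      apply Finset.sum_congr rfl
      intro i _
      rw [hw, mul_add, Real.exp_add]
    rw [hsplit]
    rcases eq_or_lt_of_le hMnn with hM0 | hMpos
    · -- M = 0 : d = 0
      have hd0 : d = 0 := by
        rw [← norm_eq_zero]; rw [hM] at hM0; exact hM0.symm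
      have hc0 : c = 0 := by simp [hc, hd0]
      simp [hd0, hc0, ← hT, hM0.symm, hT, hW]
    · have hTpos : 0 < T := mul_pos hβ hMpos
      set C : ℝ := (Real.exp T + Real.exp (-T)) / 2 with hC
      set Sh : ℝ := (Real.exp T - Real.exp (-T)) / 2 with hSh
      have chord : ∀ i, Real.exp (β * d i) ≤ C + (d i / M) * Sh := by
        intro i
        have hdi : |d i| ≤ M := by
          rw [hM]
          simpa using norm_le_pi_norm d i
        obtain ⟨hdl, hdu⟩ := abs_le.mp hdi
        have hμ : (0:ℝ) ≤ (M + d i) / (2 * M) := div_nonneg (by linarith) (by linarith)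
        have hν : (0:ℝ) ≤ (M - d i) / (2 * M) := div_nonneg (by linarith) (by linarith)
        have hμν : (M + d i) / (2 * M) + (M - d i) / (2 * M) = 1 := by
          field_simp
          ring
        have hconv := convexOn_exp.2 (Set.mem_univ T) (Set.mem_univ (-T)) hμ hν hμν
        simp only [smul_eq_mul] at hconv
        have harg : (M + d i) / (2 * M) * T + (M - d i) / (2 * M) * (-T) = β * d i := by
          rw [hT]; field_simp; ring
        rw [harg] at hconv
        calc Real.exp (β * d i) ≤ (M + d i) / (2 * M) * Real.exp T
              + (M - d i) / (2 * M) * Real.exp (-T) := hconv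
          _ = C + (d i / M) * Sh := by rw [hC, hSh]; field_simp; ring
      calc (∑ i, w i * Real.exp (β * d i))
          ≤ ∑ i, w i * (C + (d i / M) * Sh) :=
            Finset.sum_le_sum fun i _ =>
              mul_le_mul_of_nonneg_left (chord i) (Real.exp_pos _).le
        _ = ∑ i, (C * w i + (Sh / M) * (w i * d i)) := by
            apply Finset.sum_congr rfl
            intro i _
            ring
        _ = C * W + (Sh / M) * (W * c) := by
            rw [Finset.sum_add_distrib, ← Finset.mul_sum, ← Finset.mul_sum, hwd, hW]
        _ = W * (C + (β * c / T) * Sh) := by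
            rw [hT]; field_simp
        _ ≤ W * Real.exp (β * c + T ^ 2) :=
            mul_le_mul_of_nonneg_left
              (by simpa [hC, hSh] using key (β * c) hTpos) hWpos.le
  -- take logs
  have hZpos : 0 < ∑ i, Real.exp (β * (y i + d i)) :=
    Finset.sum_pos (fun i _ => Real.exp_pos _) Finset.univ_nonempty
  have hlog : Real.log (∑ i, Real.exp (β * (y i + d i)))
      ≤ Real.log W + (β * c + T ^ 2) := by
    calc Real.log (∑ i, Real.exp (β * (y i + d i)))
        ≤ Real.log (W * Real.exp (β * c + T ^ 2)) := Real.log_le_log hZpos hZ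
      _ = Real.log W + (β * c + T ^ 2) := by
          rw [Real.log_mul hWpos.ne' (Real.exp_ne_zero _), Real.log_exp]
  -- smax-level bound
  have hsmax : smax β (fun i => y i + d i) ≤ smax β y + c + β * M ^ 2 := by
    have h1 : (1 / β) * Real.log (∑ i, Real.exp (β * (y i + d i)))
        ≤ (1 / β) * (Real.log W + (β * c + T ^ 2)) :=
      mul_le_mul_of_nonneg_left hlog (by positivity)
    have h2 : (1 / β) * (Real.log W + (β * c + T ^ 2))
        = (1 / β) * Real.log W + c + β * M ^ 2 := by
      rw [hT]; field_simp; ring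
    rw [smax, smax]
    rw [← hW]
    linarith
  -- conclude
  rw [hΦ, hΦ, Matrix.mulVec_add, ← hy, ← hd]
  have hb : ∑ i, b i * (x + h) i = (∑ i, b i * x i) + ∑ i, b i * h i := by
    rw [← Finset.sum_add_distrib]
    apply Finset.sum_congr rfl
    intro i _
    simp [mul_add]
  have : smax β (y + d) ≤ smax β y + c + β * M ^ 2 := by
    exact hsmax
  rw [hb]
  rw [hM] at this
  linarith
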